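/- Let ε > 0, ξ > 0, and define z(ξ₁) = s_ε(ξ₁) + s_ε(ξ - ξ₁) where s_ε(η) = (η/ε²)(√(1+ε²η²)-1). Then for all ξ₁ ≥ ξ/2, the derivative satisfies z'(ξ₁) = ξ(2ξ₁ - ξ) · (2⟨εξ₁⟩⟨ε(ξ-ξ₁)⟩ + 1) / (⟨εξ₁⟩⟨ε(ξ-ξ₁)⟩(⟨εξ₁⟩ + ⟨ε(ξ-ξ₁)⟩)) ≥ ξ(2ξ₁ - ξ)/⟨εξ₁⟩. In particular, z is strictly increasing on (ξ/2, ∞). -/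

import Mathlib

noncomputable def jb (x : ℝ) : ℝ := Real.sqrt (1 + x ^ 2)

noncomputable def sB (ε ξ : ℝ) : ℝ := ξ / ε ^ 2 * (jb (ε * ξ) - 1)

lemma jb_pos (x : ℝ) : 0 < jb x := Real.sqrt_pos.2 (by positivity)

lemma jb_sq (x : ℝ) : jb x ^ 2 = 1 + x ^ 2 := Real.sq_sqrt (by positivity)

lemma abs_le_jb (x : ℝ) : |x| ≤ jb x := by
  rw [← Real.sqrt_sq_eq_abs]
  exact Real.sqrt_le_sqrt (by nlinarith)

lemma hasDerivAt_jb (x : ℝ) : HasDerivAt jb (x / jb x) x := by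
  have h : HasDerivAt (fun y : ℝ => 1 + y ^ 2) (2 * x) x := by
    simpa using (hasDerivAt_pow 2 x).const_add 1
  have := h.sqrt (by positivity)
  refine this.congr_deriv ?_
  unfold jb
  rw [mul_div_mul_left _ _ two_ne_zero]

lemma hasDerivAt_sB (ε : ℝ) (hε : ε ≠ 0) (x : ℝ) :
    HasDerivAt (sB ε) ((jb (ε * x) - 1) / ε ^ 2 + x ^ 2 / jb (ε * x)) x := by
  have h1 : HasDerivAt (fun y : ℝ => jb (ε * y)) (ε * x / jb (ε * x) * ε) x :=
    by
      have hl : HasDerivAt (fun y : ℝ => ε * y) ε x := by simpa using (hasDerivAt_id x).const_mul ε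
      exact (hasDerivAt_jb (ε * x)).comp x hl
  have h2 : HasDerivAt (fun y : ℝ => y / ε ^ 2) (1 / ε ^ 2) x :=
    (hasDerivAt_id x).div_const _
  have := h2.mul (h1.sub_const 1)
  refine this.congr_deriv ?_
  have := (jb_pos (ε * x)).ne'
  field_simp

lemma key_eq (ε p q : ℝ) (hε : ε ≠ 0) :
    ((jb (ε * p) - 1) / ε ^ 2 + p ^ 2 / jb (ε * p)) -
      ((jb (ε * q) - 1) / ε ^ 2 + q ^ 2 / jb (ε * q)) =
    (p ^ 2 - q ^ 2) * (2 * jb (ε * p) * jb (ε * q) + 1) /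
      (jb (ε * p) * jb (ε * q) * (jb (ε * p) + jb (ε * q))) := by
  have ha := jb_pos (ε * p)
  have hb := jb_pos (ε * q)
  have ha2 := jb_sq (ε * p)
  have hb2 := jb_sq (ε * q)
  set a := jb (ε * p)
  set b := jb (ε * q)
  have hab : a + b ≠ 0 := by positivity
  field_simp
  linear_combination (2*a*b + 1 - b*(a+b)) * ha2 + (a*(a+b) - (2*a*b + 1)) * hb2

theorem stmt_5 (ε ξ : ℝ) (hε : 0 < ε) (hξ : 0 < ξ) :
    (∀ ξ₁ : ℝ, ξ / 2 ≤ ξ₁ →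
      HasDerivAt (fun η => sB ε η + sB ε (ξ - η))
        (ξ * (2 * ξ₁ - ξ) * (2 * jb (ε * ξ₁) * jb (ε * (ξ - ξ₁)) + 1) /
          (jb (ε * ξ₁) * jb (ε * (ξ - ξ₁)) * (jb (ε * ξ₁) + jb (ε * (ξ - ξ₁))))) ξ₁ ∧
      ξ * (2 * ξ₁ - ξ) / jb (ε * ξ₁) ≤
        ξ * (2 * ξ₁ - ξ) * (2 * jb (ε * ξ₁) * jb (ε * (ξ - ξ₁)) + 1) /
          (jb (ε * ξ₁) * jb (ε * (ξ - ξ₁)) * (jb (ε * ξ₁) + jb (ε * (ξ - ξ₁))))) ∧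
    StrictMonoOn (fun η => sB ε η + sB ε (ξ - η)) (Set.Ioi (ξ / 2)) := by
  have hε' : ε ≠ 0 := hε.ne'
  have hder : ∀ ξ₁ : ℝ, HasDerivAt (fun η => sB ε η + sB ε (ξ - η))
      (ξ * (2 * ξ₁ - ξ) * (2 * jb (ε * ξ₁) * jb (ε * (ξ - ξ₁)) + 1) /
        (jb (ε * ξ₁) * jb (ε * (ξ - ξ₁)) * (jb (ε * ξ₁) + jb (ε * (ξ - ξ₁))))) ξ₁ := by
    intro ξ₁
    have h1 := hasDerivAt_sB ε hε' ξ₁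
    have hc : HasDerivAt (fun η : ℝ => ξ - η) (-1 : ℝ) ξ₁ := by
      simpa using (hasDerivAt_id ξ₁).const_sub ξ
    have h2 : HasDerivAt (fun η => sB ε (ξ - η))
        (((jb (ε * (ξ - ξ₁)) - 1) / ε ^ 2 + (ξ - ξ₁) ^ 2 / jb (ε * (ξ - ξ₁))) * (-1)) ξ₁ :=
      (hasDerivAt_sB ε hε' (ξ - ξ₁)).comp ξ₁ hc
    have H := h1.add h2
    refine H.congr_deriv ?_
    have hkey := key_eq ε ξ₁ (ξ - ξ₁) hε'
    have hnum : ξ * (2 * ξ₁ - ξ) = ξ₁ ^ 2 - (ξ - ξ₁) ^ 2 := by ring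
    rw [hnum, ← hkey]
    ring
  have hineq : ∀ ξ₁ : ℝ, ξ / 2 ≤ ξ₁ →
      ξ * (2 * ξ₁ - ξ) / jb (ε * ξ₁) ≤
        ξ * (2 * ξ₁ - ξ) * (2 * jb (ε * ξ₁) * jb (ε * (ξ - ξ₁)) + 1) /
          (jb (ε * ξ₁) * jb (ε * (ξ - ξ₁)) * (jb (ε * ξ₁) + jb (ε * (ξ - ξ₁)))) := by
    intro ξ₁ hξ₁
    have ha := jb_pos (ε * ξ₁)
    have hb := jb_pos (ε * (ξ - ξ₁))
    have ha2 := jb_sq (ε * ξ₁)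
    have hb2 := jb_sq (ε * (ξ - ξ₁))
    set a := jb (ε * ξ₁)
    set b := jb (ε * (ξ - ξ₁))
    have hxpos : 0 < ξ₁ := by linarith
    have h1 : |ε * (ξ - ξ₁)| ≤ b := abs_le_jb _
    have h2 : ε * ξ₁ ≤ a := le_trans (le_abs_self _) (abs_le_jb _)
    have habs : |ξ - ξ₁| ≤ ξ₁ := abs_le.2 ⟨by linarith, by linarith⟩
    have h1' : ε * |ξ - ξ₁| ≤ b := by rwa [abs_mul, abs_of_pos hε] at h1
    have h3 : ε * |ξ - ξ₁| ≤ a := le_trans (by nlinarith [abs_nonneg (ξ - ξ₁)]) h2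
    have hprod : ε ^ 2 * (ξ - ξ₁) ^ 2 ≤ a * b := by
      nlinarith [mul_le_mul h3 h1' (by positivity : (0:ℝ) ≤ ε * |ξ - ξ₁|) ha.le,
        sq_abs (ξ - ξ₁)]
    have hbb : b ^ 2 ≤ a * b + 1 := by rw [hb2]; nlinarith
    have hc : 0 ≤ ξ * (2 * ξ₁ - ξ) := by nlinarith
    rw [div_le_div_iff₀ ha (by positivity)]
    nlinarith [mul_nonneg (mul_nonneg hc ha.le) (by linarith : (0:ℝ) ≤ a * b + 1 - b ^ 2)]
  refine ⟨fun ξ₁ hξ₁ => ⟨hder ξ₁, hineq ξ₁ hξ₁⟩, ?_⟩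
  apply strictMonoOn_of_deriv_pos (convex_Ioi _)
  · exact fun x _ => (hder x).differentiableAt.continuousAt.continuousWithinAt
  · intro x hx
    rw [interior_Ioi] at hx
    rw [(hder x).deriv]
    have ha := jb_pos (ε * x)
    have hb := jb_pos (ε * (ξ - x))
    have hx' : ξ / 2 < x := hx
    apply div_pos
    · exact mul_pos (mul_pos hξ (by linarith)) (by positivity)
    · positivity
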